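/- arXiv:1512.04462 — 5 statements merged into one kernel-verified Lean document; each statement's English description precedes it below -/
import Mathlib

section
/- For all parameters β, h, γ ≥ 0 and all Borel probability measures μ, ν on [0,1], the Monge–Kantorovich distance satisfies d(T_{β,h,γ}(μ), T_{β,h,γ}(ν)) ≤ (γ(e^β − 1)/4) · d(μ, ν). -/
open MeasureTheory Real

noncomputable section

/-- The unit interval `[0,1]` as a measurable space. -/
abbrev I01 := Set.Icc (0 : ℝ) 1

/-- The Monge–Kantorovich (Wasserstein-1) distance between two measures on `[0,1]`:
the infimum of `E|X - Y|` over all couplings. -/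
def MKdist (μ ν : Measure I01) : ℝ :=
  sInf {c | ∃ pr : Measure (I01 × I01), IsProbabilityMeasure pr ∧
    pr.fst = μ ∧ pr.snd = ν ∧ c = ∫ p, |(p.1 : ℝ) - (p.2 : ℝ)| ∂pr}

/-- The Poisson distribution with parameter `γ` on `ℕ`. -/
def poissonMeasure (γ : ℝ) : Measure ℕ :=
  Measure.sum fun n => ENNReal.ofReal (exp (-γ) * γ ^ n / n.factorial) • Measure.dirac n

/-- The value `(1 + e^{-h} ∏_{i<r} (1 - (1-e^{-β}) x_i)^{-1})^{-1}`, projected to `[0,1]`. -/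
def Tval (β h : ℝ) {r : ℕ} (x : Fin r → I01) : I01 :=
  Set.projIcc 0 1 zero_le_one
    ((1 + exp (-h) * (∏ i, (1 - (1 - exp (-β)) * (x i : ℝ)))⁻¹)⁻¹)

/-- The cavity operator `T_{β,h,γ}` on probability measures on `[0,1]`:
the law of `(1 + e^{-h} ∏_{i≤r} (1 - (1-e^{-β}) X_i)^{-1})^{-1}` where the `X_i`
are i.i.d. `ν`-distributed and `r` is an independent Poisson(γ) random variable. -/
def Tmap (β h γ : ℝ) (ν : Measure I01) : Measure I01 :=
  (poissonMeasure γ).bind fun r =>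
    Measure.map (fun x : Fin r → I01 => Tval β h x) (Measure.pi fun _ : Fin r => ν)

/-- The replica-symmetry constant `C(β,γ)`. -/
def Cconst (β γ : ℝ) : ℝ :=
  7 * (γ + γ ^ 3) * (exp (2 * β) - 1) * exp (γ * (exp (2 * β) - 1))

/-- Spin value of a Boolean. -/
def b2r (b : Bool) : ℝ := if b then 1 else 0

/-- Bernoulli measure on `Bool` with success probability `p`. -/
def bern (p : ℝ) : Measure Bool :=
  ENNReal.ofReal (1 - p) • Measure.dirac false + ENNReal.ofReal p • Measure.dirac true

/-- The disorder: i.i.d. Bernoulli(γ/N) variables `g i j` (only `i < j` is used). -/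
def disorderMeasure (N : ℕ) (γ : ℝ) : Measure (Fin N → Fin N → Bool) :=
  Measure.pi fun _ => Measure.pi fun _ => bern (γ / N)

/-- The Hamiltonian `H_{N,β,h,γ}(σ) = h Σ σ_i - β Σ_{i<j} g_{ij} σ_i σ_j`. -/
def Ham (N : ℕ) (β h : ℝ) (g : Fin N → Fin N → Bool) (σ : Fin N → Bool) : ℝ :=
  h * ∑ i, b2r (σ i) -
    β * ∑ i, ∑ j, (if i < j ∧ g i j = true then b2r (σ i) * b2r (σ j) else 0)

/-- The partition function. -/
def Zfun (N : ℕ) (β h : ℝ) (g : Fin N → Fin N → Bool) : ℝ :=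
  ∑ σ : Fin N → Bool, exp (Ham N β h g σ)

/-- Quenched Gibbs expectation `⟨f⟩`. -/
def gibbs (N : ℕ) (β h : ℝ) (g : Fin N → Fin N → Bool) (f : (Fin N → Bool) → ℝ) : ℝ :=
  (∑ σ : Fin N → Bool, f σ * exp (Ham N β h g σ)) / Zfun N β h g

/-- Expectation `⟨f⟩_Y` under the product measure on spins with marginals `⟨σ_i⟩_Y = Y i`. -/
def prodExp (k : ℕ) (Y : Fin k → ℝ) (f : (Fin k → Bool) → ℝ) : ℝ :=
  ∑ σ : Fin k → Bool, f σ * ∏ i, (if σ i then Y i else 1 - Y i)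

/-- Mean free energy `f_N(β,h,γ)`. -/
def freeEnergy (N : ℕ) (β h γ : ℝ) : ℝ :=
  ∫ g, (N : ℝ)⁻¹ * log (Zfun N β h g) ∂(disorderMeasure N γ)

/-- Unnormalized mean free energy `F_N(β,h,γ) = E log Z_N`. -/
def Fenergy (N : ℕ) (β h γ : ℝ) : ℝ :=
  ∫ g, log (Zfun N β h g) ∂(disorderMeasure N γ)

end



noncomputable section TLipAux

namespace TLip

def gval (β h : ℝ) {r : ℕ} (x : Fin r → I01) : ℝ :=
  (1 + exp (-h) * (∏ i, (1 - (1 - exp (-β)) * (x i : ℝ)))⁻¹)⁻¹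

lemma key1 (a c ε s t : ℝ) (ha : 0 < a) (hc : 0 < c) (hε0 : 0 ≤ ε) (hε1 : ε < 1)
    (hs0 : 0 ≤ s) (hs1 : s ≤ 1) (ht0 : 0 ≤ t) (ht1 : t ≤ 1) :
    |(1 + a * ((1 - ε * s) * c)⁻¹)⁻¹ - (1 + a * ((1 - ε * t) * c)⁻¹)⁻¹|
      ≤ ε / (4 * (1 - ε)) * |s - t| := by
  set u := 1 - ε * s with hu_def
  set v := 1 - ε * t with hv_def
  have hu1 : 1 - ε ≤ u := by nlinarith
  have hv1 : 1 - ε ≤ v := by nlinarith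
  have h1ε : 0 < 1 - ε := by linarith
  have hup : 0 < u := lt_of_lt_of_le h1ε hu1
  have hvp : 0 < v := lt_of_lt_of_le h1ε hv1
  have hcu : 0 < c * u + a := by positivity
  have hcv : 0 < c * v + a := by positivity
  have e1 : (1 + a * (u * c)⁻¹)⁻¹ = c * u / (c * u + a) := by
    rw [show 1 + a * (u * c)⁻¹ = (c * u + a) / (c * u) by field_simp, inv_div]
  have e2 : (1 + a * (v * c)⁻¹)⁻¹ = c * v / (c * v + a) := by
    rw [show 1 + a * (v * c)⁻¹ = (c * v + a) / (c * v) by field_simp, inv_div]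
  rw [e1, e2]
  have e3 : c * u / (c * u + a) - c * v / (c * v + a)
      = a * c * (u - v) / ((c * u + a) * (c * v + a)) := by
    field_simp
    ring
  rw [e3, abs_div, abs_mul (a * c) (u - v), abs_mul (c * u + a) (c * v + a),
    abs_of_pos (mul_pos ha hc), abs_of_pos hcu, abs_of_pos hcv]
  have e4 : |u - v| = ε * |s - t| := by
    rw [show u - v = ε * (t - s) by rw [hu_def, hv_def]; ring, abs_mul,
      abs_of_nonneg hε0, abs_sub_comm]
  rw [e4]
  have huv : (1 - ε) * (1 - ε) ≤ u * v := mul_le_mul hu1 hv1 (le_of_lt h1ε) (le_of_lt hup)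
  have hD4 : 4 * (a * c * (1 - ε)) ≤ (c * u + a) * (c * v + a) := by
    nlinarith [sq_nonneg (c * (1 - ε) - a), mul_le_mul_of_nonneg_left huv (sq_nonneg c),
      mul_pos ha hc, mul_pos hc hup, mul_pos hc hvp]
  calc a * c * (ε * |s - t|) / ((c * u + a) * (c * v + a))
      ≤ a * c * (ε * |s - t|) / (4 * (a * c * (1 - ε))) := by
        gcongr
    _ = ε / (4 * (1 - ε)) * |s - t| := by field_simp


variable {β h : ℝ}

lemma one_sub_eps_pos (hβ : 0 ≤ β) : 0 < 1 - (1 - exp (-β)) := by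
  simpa using exp_pos (-β)

lemma eps_nonneg (hβ : 0 ≤ β) : 0 ≤ 1 - exp (-β) := by
  have : exp (-β) ≤ 1 := exp_le_one_iff.mpr (neg_nonpos.mpr hβ)
  linarith

lemma factor_pos (hβ : 0 ≤ β) (z : I01) : 0 < 1 - (1 - exp (-β)) * (z : ℝ) := by
  have h1 : (z : ℝ) ≤ 1 := z.2.2
  have h0 : 0 ≤ (z : ℝ) := z.2.1
  have := exp_pos (-β)
  nlinarith [eps_nonneg hβ]

lemma gval_update (hβ : 0 ≤ β) {r : ℕ} (x : Fin r → I01) (i : Fin r) (s t : I01) :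
    |gval β h (Function.update x i s) - gval β h (Function.update x i t)|
      ≤ (1 - exp (-β)) / (4 * (1 - (1 - exp (-β)))) * |(s : ℝ) - (t : ℝ)| := by
  classical
  set ε := 1 - exp (-β) with hε_def
  set c := ∏ j ∈ Finset.univ.erase i, (1 - ε * ((x j : ℝ))) with hc_def
  have hc : 0 < c := Finset.prod_pos fun j _ => factor_pos hβ (x j)
  have key : ∀ w : I01, gval β h (Function.update x i w)
      = (1 + exp (-h) * ((1 - ε * (w : ℝ)) * c)⁻¹)⁻¹ := by
    intro w
    have hprod : (∏ j, (1 - ε * ((Function.update x i w j : I01) : ℝ)))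
        = (1 - ε * (w : ℝ)) * c := by
      rw [← Finset.mul_prod_erase Finset.univ _ (Finset.mem_univ i)]
      rw [Function.update_self]
      congr 1
      refine Finset.prod_congr rfl fun j hj => ?_
      rw [Function.update_of_ne (Finset.mem_erase.mp hj).1]
    rw [gval, hprod]
  rw [key s, key t]
  exact key1 _ _ _ _ _ (exp_pos (-h)) hc (eps_nonneg hβ)
    (by simpa [hε_def] using one_sub_eps_pos hβ) s.2.1 s.2.2 t.2.1 t.2.2

lemma gval_lipschitz (hβ : 0 ≤ β) {r : ℕ} (x y : Fin r → I01) :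
    |gval β h x - gval β h y|
      ≤ (1 - exp (-β)) / (4 * (1 - (1 - exp (-β)))) * ∑ i, |(x i : ℝ) - (y i : ℝ)| := by
  classical
  set K := (1 - exp (-β)) / (4 * (1 - (1 - exp (-β)))) with hK_def
  have hK : 0 ≤ K := by
    have := one_sub_eps_pos hβ
    have := eps_nonneg hβ
    positivity
  have main : ∀ s : Finset (Fin r),
      |gval β h (s.piecewise y x) - gval β h x| ≤ K * ∑ i ∈ s, |(y i : ℝ) - (x i : ℝ)| := by
    intro s
    induction s using Finset.induction with
    | empty => simp
    | @insert i s hnot ih =>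
      rw [Finset.piecewise_insert]
      set z := s.piecewise y x with hz_def
      have hzx : z i = x i := Finset.piecewise_eq_of_notMem _ _ _ hnot
      have step : |gval β h (Function.update z i (y i)) - gval β h z| ≤ K * |(y i : ℝ) - (x i : ℝ)| := by
        have := gval_update (h := h) hβ z i (y i) (z i)
        rw [Function.update_eq_self, hzx] at this
        exact this
      calc |gval β h (Function.update z i (y i)) - gval β h x|
          ≤ |gval β h (Function.update z i (y i)) - gval β h z| + |gval β h z - gval β h x| :=
            abs_sub_le _ _ _
        _ ≤ K * |(y i : ℝ) - (x i : ℝ)| + K * ∑ j ∈ s, |(y j : ℝ) - (x j : ℝ)| :=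
            add_le_add step ih
        _ = K * ∑ j ∈ insert i s, |(y j : ℝ) - (x j : ℝ)| := by
            rw [Finset.sum_insert hnot, mul_add]
  have := main Finset.univ
  rw [Finset.piecewise_univ] at this
  calc |gval β h x - gval β h y| = |gval β h y - gval β h x| := abs_sub_comm _ _
    _ ≤ K * ∑ i, |(y i : ℝ) - (x i : ℝ)| := this
    _ = K * ∑ i, |(x i : ℝ) - (y i : ℝ)| := by
        congr 1
        exact Finset.sum_congr rfl fun j _ => abs_sub_comm _ _

lemma const_eq (hβ : 0 ≤ β) :
    (1 - exp (-β)) / (4 * (1 - (1 - exp (-β)))) = (exp β - 1) / 4 := by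
  rw [exp_neg]
  have := exp_pos β
  field_simp
  ring

lemma tval_lipschitz (hβ : 0 ≤ β) {r : ℕ} (x y : Fin r → I01) :
    |(Tval β h x : ℝ) - (Tval β h y : ℝ)|
      ≤ (exp β - 1) / 4 * ∑ i, |(x i : ℝ) - (y i : ℝ)| := by
  have h1 : |(Tval β h x : ℝ) - (Tval β h y : ℝ)| ≤ |gval β h x - gval β h y| :=
    Set.abs_projIcc_sub_projIcc (h := zero_le_one)
  refine h1.trans ?_
  rw [← const_eq hβ]
  exact gval_lipschitz hβ x y

section MeasurePart

lemma measurable_gval (β h : ℝ) (r : ℕ) : Measurable fun x : Fin r → I01 => gval β h x := by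
  apply Measurable.inv
  apply Measurable.add measurable_const
  apply Measurable.const_mul
  apply Measurable.inv
  exact Finset.measurable_prod _ fun i _ =>
    measurable_const.sub ((measurable_subtype_coe.comp (measurable_pi_apply i)).const_mul _)

lemma measurable_Tval (β h : ℝ) (r : ℕ) : Measurable fun x : Fin r → I01 => Tval β h x :=
  continuous_projIcc.measurable.comp (measurable_gval β h r)

def pairT (β h : ℝ) (r : ℕ) : (Fin r → I01 × I01) → I01 × I01 := fun xy =>
  (Tval β h fun i => (xy i).1, Tval β h fun i => (xy i).2)

lemma measurable_proj1 (r : ℕ) :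
    Measurable fun xy : Fin r → I01 × I01 => fun i => (xy i).1 :=
  measurable_pi_lambda _ fun i => measurable_fst.comp (measurable_pi_apply i)

lemma measurable_proj2 (r : ℕ) :
    Measurable fun xy : Fin r → I01 × I01 => fun i => (xy i).2 :=
  measurable_pi_lambda _ fun i => measurable_snd.comp (measurable_pi_apply i)

lemma measurable_pairT (β h : ℝ) (r : ℕ) : Measurable (pairT β h r) :=
  ((measurable_Tval β h r).comp (measurable_proj1 r)).prodMk
    ((measurable_Tval β h r).comp (measurable_proj2 r))

lemma pi_map_coord {α β' : Type*} [MeasurableSpace α] [MeasurableSpace β'] (g : α → β')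
    (hg : Measurable g) (ρ : Measure α) [IsProbabilityMeasure ρ] (r : ℕ) :
    Measure.map (fun x : Fin r → α => fun i => g (x i)) (Measure.pi fun _ => ρ)
      = Measure.pi fun _ : Fin r => ρ.map g := by
  haveI : IsProbabilityMeasure (ρ.map g) := Measure.isProbabilityMeasure_map hg.aemeasurable
  refine (Measure.pi_eq fun s hs => ?_).symm
  have hF : Measurable fun x : Fin r → α => fun i => g (x i) :=
    measurable_pi_lambda _ fun i => hg.comp (measurable_pi_apply i)
  rw [Measure.map_apply hF (MeasurableSet.univ_pi hs)]
  have hpre : (fun x : Fin r → α => fun i => g (x i)) ⁻¹' Set.pi Set.univ s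
      = Set.pi Set.univ fun i => g ⁻¹' s i := by
    ext; simp [Set.mem_pi]
  rw [hpre, Measure.pi_pi]
  exact Finset.prod_congr rfl fun i _ => (Measure.map_apply hg (hs i)).symm

lemma pi_map_eval {α : Type*} [MeasurableSpace α] (ρ : Measure α) [IsProbabilityMeasure ρ]
    (r : ℕ) (i : Fin r) :
    Measure.map (fun x : Fin r → α => x i) (Measure.pi fun _ : Fin r => ρ) = ρ := by
  classical
  ext s hs
  rw [Measure.map_apply (measurable_pi_apply i) hs,
    show (fun x : Fin r → α => x i) ⁻¹' s = Set.pi Set.univ (Function.update (fun _ => Set.univ) i s) by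
      ext x; simp [Set.mem_pi, Function.update_apply],
    Measure.pi_pi]
  rw [Finset.prod_eq_single i (fun j _ hj => by simp [Function.update_of_ne hj]) (by simp)]
  simp

lemma bind_poisson {α : Type*} [MeasurableSpace α] (γ : ℝ) (κ : ℕ → Measure α) :
    (poissonMeasure γ).bind κ
      = Measure.sum fun n => ENNReal.ofReal (exp (-γ) * γ ^ n / n.factorial) • κ n := by
  ext s hs
  rw [Measure.bind_apply hs measurable_from_nat.aemeasurable, poissonMeasure, lintegral_sum_measure,
    Measure.sum_apply _ hs]
  refine tsum_congr fun n => ?_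
  rw [lintegral_smul_measure, lintegral_dirac, Measure.smul_apply, smul_eq_mul]

lemma poisson_hasSum (γ : ℝ) (hγ : 0 ≤ γ) :
    HasSum (fun n => exp (-γ) * γ ^ n / n.factorial) 1 := by
  have := ProbabilityTheory.poissonPMFRealSum ⟨γ, hγ⟩
  exact this

lemma poisson_term_nonneg (γ : ℝ) (hγ : 0 ≤ γ) (n : ℕ) :
    0 ≤ exp (-γ) * γ ^ n / n.factorial :=
  div_nonneg (mul_nonneg (exp_pos _).le (pow_nonneg hγ n)) (Nat.cast_nonneg _)

lemma poisson_mean (γ : ℝ) (hγ : 0 ≤ γ) :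
    HasSum (fun n : ℕ => exp (-γ) * γ ^ n / n.factorial * n) γ := by
  have h1 := (poisson_hasSum γ hγ).mul_left γ
  rw [mul_one] at h1
  have h2 : ∀ n : ℕ, exp (-γ) * γ ^ (n + 1) / (n + 1).factorial * ((n + 1 : ℕ) : ℝ)
      = γ * (exp (-γ) * γ ^ n / n.factorial) := by
    intro n
    have hf : (n.factorial : ℝ) ≠ 0 := Nat.cast_ne_zero.mpr n.factorial_ne_zero
    rw [Nat.factorial_succ]
    push_cast
    field_simp
    ring
  have h3 : HasSum (fun n : ℕ =>
      exp (-γ) * γ ^ (n + 1) / (n + 1).factorial * ((n + 1 : ℕ) : ℝ)) γ := by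
    simpa only [h2] using h1
  have h4 := (hasSum_nat_add_iff (f := fun n : ℕ => exp (-γ) * γ ^ n / n.factorial * n) 1).mp
    (by simpa using h3)
  simpa using h4

lemma poisson_tsum_enn (γ : ℝ) (hγ : 0 ≤ γ) :
    (∑' n : ℕ, ENNReal.ofReal (exp (-γ) * γ ^ n / n.factorial)) = 1 := by
  rw [← ENNReal.ofReal_tsum_of_nonneg (poisson_term_nonneg γ hγ)
    (poisson_hasSum γ hγ).summable, (poisson_hasSum γ hγ).tsum_eq, ENNReal.ofReal_one]

lemma isProb_wsum {α : Type*} [MeasurableSpace α] {γ : ℝ} (hγ : 0 ≤ γ) (κ : ℕ → Measure α)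
    (hκ : ∀ n, IsProbabilityMeasure (κ n)) :
    IsProbabilityMeasure
      (Measure.sum fun n => ENNReal.ofReal (exp (-γ) * γ ^ n / n.factorial) • κ n) := by
  constructor
  rw [Measure.sum_apply _ MeasurableSet.univ]
  simp only [Measure.smul_apply, (hκ _).measure_univ, smul_eq_mul, mul_one]
  exact poisson_tsum_enn γ hγ

lemma fst_smul {α β : Type*} [MeasurableSpace α] [MeasurableSpace β] (c : ENNReal)
    (ρ : Measure (α × β)) : (c • ρ).fst = c • ρ.fst :=
  Measure.map_smul c ρ Prod.fst

lemma snd_smul {α β : Type*} [MeasurableSpace α] [MeasurableSpace β] (c : ENNReal)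
    (ρ : Measure (α × β)) : (c • ρ).snd = c • ρ.snd :=
  Measure.map_smul c ρ Prod.snd

lemma Tmap_eq (β h γ : ℝ) (μ : Measure I01) :
    Tmap β h γ μ = Measure.sum fun n => ENNReal.ofReal (exp (-γ) * γ ^ n / n.factorial) •
      Measure.map (fun x : Fin n → I01 => Tval β h x) (Measure.pi fun _ : Fin n => μ) :=
  bind_poisson γ _

lemma fst_Qn (β h : ℝ) (pr : Measure (I01 × I01)) [IsProbabilityMeasure pr]
    {μ : Measure I01} (hfst : pr.fst = μ) (n : ℕ) :
    (Measure.map (pairT β h n) (Measure.pi fun _ : Fin n => pr)).fst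
      = Measure.map (fun x : Fin n → I01 => Tval β h x) (Measure.pi fun _ : Fin n => μ) := by
  rw [Measure.fst, Measure.map_map measurable_fst (measurable_pairT β h n)]
  have hcomp : (Prod.fst ∘ pairT β h n)
      = (fun x : Fin n → I01 => Tval β h x) ∘ (fun xy : Fin n → I01 × I01 => fun i => (xy i).1) :=
    rfl
  rw [hcomp, ← Measure.map_map (measurable_Tval β h n) (measurable_proj1 n)]
  have hμ' : pr.map Prod.fst = μ := hfst
  rw [pi_map_coord Prod.fst measurable_fst pr n, hμ']

lemma snd_Qn (β h : ℝ) (pr : Measure (I01 × I01)) [IsProbabilityMeasure pr]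
    {ν : Measure I01} (hsnd : pr.snd = ν) (n : ℕ) :
    (Measure.map (pairT β h n) (Measure.pi fun _ : Fin n => pr)).snd
      = Measure.map (fun x : Fin n → I01 => Tval β h x) (Measure.pi fun _ : Fin n => ν) := by
  rw [Measure.snd, Measure.map_map measurable_snd (measurable_pairT β h n)]
  have hcomp : (Prod.snd ∘ pairT β h n)
      = (fun x : Fin n → I01 => Tval β h x) ∘ (fun xy : Fin n → I01 × I01 => fun i => (xy i).2) :=
    rfl
  rw [hcomp, ← Measure.map_map (measurable_Tval β h n) (measurable_proj2 n)]
  have hν' : pr.map Prod.snd = ν := hsnd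
  rw [pi_map_coord Prod.snd measurable_snd pr n, hν']

lemma cont_f : Continuous fun p : I01 × I01 => |(p.1 : ℝ) - (p.2 : ℝ)| :=
  ((continuous_subtype_val.comp continuous_fst).sub
    (continuous_subtype_val.comp continuous_snd)).abs

lemma bound_f (p : I01 × I01) : ‖|(p.1 : ℝ) - (p.2 : ℝ)|‖ ≤ 1 := by
  rw [Real.norm_eq_abs, abs_abs, abs_sub_le_iff]
  constructor
  · have := p.1.2.2; have := p.2.2.1; linarith
  · have := p.2.2.2; have := p.1.2.1; linarith

lemma int_f (m : Measure (I01 × I01)) [IsFiniteMeasure m] :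
    Integrable (fun p : I01 × I01 => |(p.1 : ℝ) - (p.2 : ℝ)|) m :=
  Integrable.mono' (integrable_const 1) cont_f.measurable.aestronglyMeasurable
    (Filter.Eventually.of_forall bound_f)

lemma cost_bound (β h γ : ℝ) (hβ : 0 ≤ β) (hγ : 0 ≤ γ) (pr : Measure (I01 × I01))
    [IsProbabilityMeasure pr] :
    ∫ p, |(p.1 : ℝ) - (p.2 : ℝ)| ∂(Measure.sum fun n =>
        ENNReal.ofReal (exp (-γ) * γ ^ n / n.factorial) •
          Measure.map (pairT β h n) (Measure.pi fun _ : Fin n => pr))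
      ≤ γ * (exp β - 1) / 4 * ∫ p, |(p.1 : ℝ) - (p.2 : ℝ)| ∂pr := by
  classical
  set c : ℝ := ∫ p, |(p.1 : ℝ) - (p.2 : ℝ)| ∂pr with hc_def
  have hc0 : 0 ≤ c := integral_nonneg fun p => abs_nonneg _
  set K : ℝ := (exp β - 1) / 4 with hK_def
  have hK0 : 0 ≤ K := by
    have := add_one_le_exp β
    rw [hK_def]
    linarith
  set p : ℕ → ℝ := fun n => exp (-γ) * γ ^ n / n.factorial with hp_def
  set Qn : ℕ → Measure (I01 × I01) :=
    fun n => Measure.map (pairT β h n) (Measure.pi fun _ : Fin n => pr) with hQn_def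
  haveI hQnP : ∀ n, IsProbabilityMeasure (Qn n) :=
    fun n => Measure.isProbabilityMeasure_map (measurable_pairT β h n).aemeasurable
  haveI hQP : IsProbabilityMeasure (Measure.sum fun n => ENNReal.ofReal (p n) • Qn n) :=
    isProb_wsum hγ Qn hQnP
  set A : ℕ → ℝ := fun n => ∫ q, |(q.1 : ℝ) - (q.2 : ℝ)| ∂(Qn n) with hA_def
  have hA0 : ∀ n, 0 ≤ A n := fun n => integral_nonneg fun q => abs_nonneg _
  have hAle : ∀ n, A n ≤ K * (n * c) := by
    intro n
    have e1 : A n = ∫ xy, |((pairT β h n xy).1 : ℝ) - ((pairT β h n xy).2 : ℝ)|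
        ∂(Measure.pi fun _ : Fin n => pr) := by
      rw [hA_def, hQn_def]
      exact integral_map (measurable_pairT β h n).aemeasurable
        cont_f.measurable.aestronglyMeasurable
    have int1 : Integrable (fun xy : Fin n → I01 × I01 =>
        |((pairT β h n xy).1 : ℝ) - ((pairT β h n xy).2 : ℝ)|)
        (Measure.pi fun _ : Fin n => pr) :=
      Integrable.mono' (integrable_const 1)
        (cont_f.measurable.comp (measurable_pairT β h n)).aestronglyMeasurable
        (Filter.Eventually.of_forall fun xy => bound_f _)
    have intg : ∀ i : Fin n, Integrable (fun xy : Fin n → I01 × I01 =>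
        |((xy i).1 : ℝ) - ((xy i).2 : ℝ)|) (Measure.pi fun _ : Fin n => pr) := fun i =>
      Integrable.mono' (integrable_const 1)
        (cont_f.measurable.comp (measurable_pi_apply i)).aestronglyMeasurable
        (Filter.Eventually.of_forall fun xy => bound_f _)
    have int2 : Integrable (fun xy : Fin n → I01 × I01 =>
        K * ∑ i, |((xy i).1 : ℝ) - ((xy i).2 : ℝ)|) (Measure.pi fun _ : Fin n => pr) :=
      (integrable_finset_sum _ fun i _ => intg i).const_mul K
    have hpt : ∀ xy : Fin n → I01 × I01,
        |((pairT β h n xy).1 : ℝ) - ((pairT β h n xy).2 : ℝ)|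
          ≤ K * ∑ i, |((xy i).1 : ℝ) - ((xy i).2 : ℝ)| := fun xy =>
      tval_lipschitz hβ _ _
    have e2 : ∀ i : Fin n, (∫ xy, |((xy i).1 : ℝ) - ((xy i).2 : ℝ)|
        ∂(Measure.pi fun _ : Fin n => pr)) = c := by
      intro i
      rw [hc_def, ← pi_map_eval pr n i,
        integral_map (measurable_pi_apply i).aemeasurable]
      rw [pi_map_eval pr n i]
      exact cont_f.measurable.aestronglyMeasurable
    calc A n = ∫ xy, |((pairT β h n xy).1 : ℝ) - ((pairT β h n xy).2 : ℝ)|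
        ∂(Measure.pi fun _ : Fin n => pr) := e1
      _ ≤ ∫ xy, K * ∑ i, |((xy i).1 : ℝ) - ((xy i).2 : ℝ)|
          ∂(Measure.pi fun _ : Fin n => pr) := integral_mono int1 int2 hpt
      _ = K * ∑ i : Fin n, ∫ xy, |((xy i).1 : ℝ) - ((xy i).2 : ℝ)|
          ∂(Measure.pi fun _ : Fin n => pr) := by
          rw [integral_const_mul, integral_finset_sum _ fun i _ => intg i]
      _ = K * (n * c) := by
          rw [Finset.sum_congr rfl fun i _ => e2 i]
          simp [mul_comm]
    -- done
  have hp0 : ∀ n, 0 ≤ p n := poisson_term_nonneg γ hγ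
  rw [integral_sum_measure (int_f _)]
  have e3 : ∀ n : ℕ, (∫ q, |(q.1 : ℝ) - (q.2 : ℝ)| ∂(ENNReal.ofReal (p n) • Qn n))
      = p n * A n := by
    intro n
    rw [integral_smul_measure, ENNReal.toReal_ofReal (hp0 n), smul_eq_mul]
  rw [tsum_congr e3]
  have hsumR : HasSum (fun n : ℕ => p n * n * (K * c)) (γ * (K * c)) :=
    (poisson_mean γ hγ).mul_right (K * c)
  have hterm : ∀ n : ℕ, p n * A n ≤ p n * n * (K * c) := by
    intro n
    calc p n * A n ≤ p n * (K * (n * c)) :=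
          mul_le_mul_of_nonneg_left (hAle n) (hp0 n)
      _ = p n * n * (K * c) := by ring
  have hsumL : Summable fun n : ℕ => p n * A n :=
    Summable.of_nonneg_of_le (fun n => mul_nonneg (hp0 n) (hA0 n)) hterm hsumR.summable
  calc (∑' n : ℕ, p n * A n) ≤ ∑' n : ℕ, p n * n * (K * c) :=
        hsumL.tsum_le_tsum hterm hsumR.summable
    _ = γ * (K * c) := hsumR.tsum_eq
    _ = γ * (exp β - 1) / 4 * c := by rw [hK_def]; ring

end MeasurePart

end TLip
end TLipAux

/-- For all parameters `β, h, γ ≥ 0` and all Borel probability measures `μ, ν`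
on `[0,1]`, the Monge–Kantorovich distance satisfies
`d(T_{β,h,γ}(μ), T_{β,h,γ}(ν)) ≤ (γ (e^β − 1) / 4) · d(μ, ν)`. -/
theorem T_operator_lipschitz (β h γ : ℝ) (hβ : 0 ≤ β) (hh : 0 ≤ h) (hγ : 0 ≤ γ)
    (μ ν : Measure I01) (hμ : IsProbabilityMeasure μ) (hν : IsProbabilityMeasure ν) :
    MKdist (Tmap β h γ μ) (Tmap β h γ ν) ≤ γ * (Real.exp β - 1) / 4 * MKdist μ ν := by
  classical
  haveI := hμ; haveI := hν
  have hK0 : 0 ≤ γ * (Real.exp β - 1) / 4 := by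
    have := add_one_le_exp β
    have h1 : 0 ≤ Real.exp β - 1 := by linarith
    positivity
  set S : Set ℝ := {c | ∃ pr : Measure (I01 × I01), IsProbabilityMeasure pr ∧
    pr.fst = μ ∧ pr.snd = ν ∧ c = ∫ p, |(p.1 : ℝ) - (p.2 : ℝ)| ∂pr} with hS_def
  set T : Set ℝ := {c | ∃ pr : Measure (I01 × I01), IsProbabilityMeasure pr ∧
    pr.fst = Tmap β h γ μ ∧ pr.snd = Tmap β h γ ν ∧
    c = ∫ p, |(p.1 : ℝ) - (p.2 : ℝ)| ∂pr} with hT_def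
  have hMKS : MKdist μ ν = sInf S := rfl
  have hMKT : MKdist (Tmap β h γ μ) (Tmap β h γ ν) = sInf T := rfl
  have hSne : S.Nonempty :=
    ⟨_, μ.prod ν, inferInstance, Measure.fst_prod, Measure.snd_prod, rfl⟩
  have hbddT : BddBelow T := by
    refine ⟨0, ?_⟩
    rintro c ⟨pr, hpr, -, -, rfl⟩
    exact integral_nonneg fun p => abs_nonneg _
  have hbddS : BddBelow S := by
    refine ⟨0, ?_⟩
    rintro c ⟨pr, hpr, -, -, rfl⟩
    exact integral_nonneg fun p => abs_nonneg _
  have key : ∀ c ∈ S, MKdist (Tmap β h γ μ) (Tmap β h γ ν) ≤ γ * (Real.exp β - 1) / 4 * c := by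
    rintro c ⟨pr, hpr, hfst, hsnd, rfl⟩
    haveI := hpr
    set Q : Measure (I01 × I01) := Measure.sum fun n =>
      ENNReal.ofReal (Real.exp (-γ) * γ ^ n / n.factorial) •
        Measure.map (TLip.pairT β h n) (Measure.pi fun _ : Fin n => pr) with hQ_def
    haveI hQn : ∀ n, IsProbabilityMeasure
        (Measure.map (TLip.pairT β h n) (Measure.pi fun _ : Fin n => pr)) :=
      fun n => Measure.isProbabilityMeasure_map (TLip.measurable_pairT β h n).aemeasurable
    haveI hQP : IsProbabilityMeasure Q := TLip.isProb_wsum hγ _ hQn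
    have hQfst : Q.fst = Tmap β h γ μ := by
      rw [hQ_def, Measure.fst_sum, TLip.Tmap_eq β h γ μ]
      congr 1
      funext n
      rw [TLip.fst_smul, TLip.fst_Qn β h pr hfst n]
    have hQsnd : Q.snd = Tmap β h γ ν := by
      rw [hQ_def, Measure.snd_sum, TLip.Tmap_eq β h γ ν]
      congr 1
      funext n
      rw [TLip.snd_smul, TLip.snd_Qn β h pr hsnd n]
    have hmem : (∫ p, |(p.1 : ℝ) - (p.2 : ℝ)| ∂Q) ∈ T :=
      ⟨Q, hQP, hQfst, hQsnd, rfl⟩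
    have h1 : MKdist (Tmap β h γ μ) (Tmap β h γ ν) ≤ ∫ p, |(p.1 : ℝ) - (p.2 : ℝ)| ∂Q := by
      rw [hMKT]
      exact csInf_le hbddT hmem
    exact h1.trans (TLip.cost_bound β h γ hβ hγ pr)
  rcases eq_or_lt_of_le hK0 with hzero | hpos
  · obtain ⟨c, hcS⟩ := id hSne
    have h2 := key c hcS
    rw [← hzero, zero_mul] at h2
    have h3 : 0 ≤ MKdist μ ν := by
      rw [hMKS]
      refine le_csInf hSne ?_
      rintro b ⟨pr, hpr, -, -, rfl⟩
      exact integral_nonneg fun p => abs_nonneg _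
    calc MKdist (Tmap β h γ μ) (Tmap β h γ ν) ≤ 0 := h2
      _ ≤ γ * (Real.exp β - 1) / 4 * MKdist μ ν := by
          rw [← hzero, zero_mul]
  · have h4 : MKdist (Tmap β h γ μ) (Tmap β h γ ν) / (γ * (Real.exp β - 1) / 4)
        ≤ MKdist μ ν := by
      rw [hMKS]
      refine le_csInf hSne fun b hb => ?_
      rw [div_le_iff₀ hpos]
      calc MKdist (Tmap β h γ μ) (Tmap β h γ ν) ≤ γ * (Real.exp β - 1) / 4 * b := key b hb
        _ = b * (γ * (Real.exp β - 1) / 4) := mul_comm _ _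
    have := (div_le_iff₀ hpos).mp h4
    linarith [this]
end

section
/- For all β, h ≥ 0, all γ, γ' ≥ 0 and every Borel probability measure ν on [0,1], the Monge–Kantorovich distance satisfies d(T_{β,h,γ}(ν), T_{β,h,γ'}(ν)) ≤ |γ − γ'|. -/
open MeasureTheory Real

section CouplingAux

open MeasureTheory Real Set
open scoped ENNReal NNReal

namespace CouplingAux

/-- Poisson weights as extended nonnegative reals. -/
noncomputable def pw (γ : ℝ) (n : ℕ) : ℝ≥0∞ :=
  ENNReal.ofReal (exp (-γ) * γ ^ n / n.factorial)

lemma summable_pois (γ : ℝ) :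
    Summable (fun n : ℕ => exp (-γ) * γ ^ n / n.factorial) := by
  simpa [mul_div_assoc] using (Real.summable_pow_div_factorial γ).mul_left (exp (-γ))

lemma tsum_pois_real (γ : ℝ) : ∑' n : ℕ, exp (-γ) * γ ^ n / n.factorial = 1 := by
  have h1 : ∀ n : ℕ, exp (-γ) * γ ^ n / (n.factorial : ℝ)
      = exp (-γ) * (γ ^ n / n.factorial) := fun n => by ring
  simp_rw [h1]
  rw [tsum_mul_left]
  have h2 : ∑' n : ℕ, γ ^ n / (n.factorial : ℝ) = exp γ := by
    rw [Real.exp_eq_exp_ℝ, NormedSpace.exp_eq_tsum_div]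
  rw [h2, ← Real.exp_add]
  simp

lemma pois_nonneg {γ : ℝ} (hγ : 0 ≤ γ) (n : ℕ) :
    0 ≤ exp (-γ) * γ ^ n / n.factorial := by positivity

lemma pw_tsum {γ : ℝ} (hγ : 0 ≤ γ) : ∑' n, pw γ n = 1 := by
  unfold pw
  rw [← ENNReal.ofReal_tsum_of_nonneg (pois_nonneg hγ) (summable_pois γ),
    tsum_pois_real, ENNReal.ofReal_one]

lemma measurable_Tval (β h : ℝ) (r : ℕ) :
    Measurable (fun x : Fin r → I01 => Tval β h x) := by
  unfold Tval
  exact continuous_projIcc.measurable.comp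
    (((((Finset.measurable_prod _ fun i _ =>
      ((measurable_subtype_coe.comp (measurable_pi_apply i)).const_mul
        _).const_sub 1).inv).const_mul _).const_add 1).inv)

/-- The law of `Tval` applied to `n` i.i.d. `ν`-samples. -/
noncomputable def Mnu (β h : ℝ) (ν : Measure I01) (n : ℕ) : Measure I01 :=
  Measure.map (fun x : Fin n → I01 => Tval β h x) (Measure.pi fun _ : Fin n => ν)

lemma Mnu_prob (β h : ℝ) (ν : Measure I01) [IsProbabilityMeasure ν] (n : ℕ) :
    IsProbabilityMeasure (Mnu β h ν n) :=
  Measure.isProbabilityMeasure_map (measurable_Tval β h n).aemeasurable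

lemma Tmap_eq (β h γ : ℝ) (ν : Measure I01) :
    Tmap β h γ ν = Measure.sum fun n => pw γ n • Mnu β h ν n := by
  ext s hs
  rw [Tmap, Measure.bind_apply hs measurable_from_top.aemeasurable, poissonMeasure,
    lintegral_sum_measure, Measure.sum_apply _ hs]
  refine tsum_congr fun n => ?_
  rw [lintegral_smul_measure, lintegral_dirac, Measure.smul_apply, smul_eq_mul]
  rfl

lemma measurable_append (n m : ℕ) :
    Measurable (fun q : (Fin n → I01) × (Fin m → I01) => Fin.append q.1 q.2) := by
  apply measurable_pi_lambda
  intro i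
  refine Fin.addCases (fun i => ?_) (fun j => ?_) i
  · simpa [Fin.append_left, Function.comp_def] using (measurable_pi_apply i).comp
      (measurable_fst : Measurable fun q : (Fin n → I01) × (Fin m → I01) => q.1)
  · simpa [Fin.append_right, Function.comp_def] using (measurable_pi_apply j).comp
      (measurable_snd : Measurable fun q : (Fin n → I01) × (Fin m → I01) => q.2)

lemma map_append (n m : ℕ) (ν : Measure I01) [IsProbabilityMeasure ν] :
    Measure.map (fun q : (Fin n → I01) × (Fin m → I01) => Fin.append q.1 q.2)
      ((Measure.pi fun _ : Fin n => ν).prod (Measure.pi fun _ : Fin m => ν))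
      = Measure.pi fun _ : Fin (n + m) => ν := by
  refine (Measure.pi_eq fun s hs => ?_).symm
  rw [Measure.map_apply (measurable_append n m) (MeasurableSet.univ_pi hs)]
  have hpre : (fun q : (Fin n → I01) × (Fin m → I01) => Fin.append q.1 q.2)
        ⁻¹' (Set.pi univ s)
      = (Set.pi univ fun i : Fin n => s (Fin.castAdd m i)) ×ˢ
        (Set.pi univ fun j : Fin m => s (Fin.natAdd n j)) := by
    ext q
    simp only [mem_preimage, mem_pi, mem_univ, true_implies, mem_prod]
    constructor
    · intro H
      exact ⟨fun i => by simpa [Fin.append_left] using H (Fin.castAdd m i),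
             fun j => by simpa [Fin.append_right] using H (Fin.natAdd n j)⟩
    · rintro ⟨H1, H2⟩ i
      refine Fin.addCases (fun i => ?_) (fun j => ?_) i
      · rw [Fin.append_left]; exact H1 i
      · rw [Fin.append_right]; exact H2 j
  rw [hpre, Measure.prod_prod, Measure.pi_pi, Measure.pi_pi, Fin.prod_univ_add]

lemma Tval_append_zero (β h : ℝ) {n : ℕ} (x : Fin n → I01) (y : Fin 0 → I01) :
    Tval β h (Fin.append x y) = Tval β h x := by
  have hxy : Fin.append x y = x := by
    funext i
    have h1 : Fin.append x y (Fin.castAdd 0 i) = x i := Fin.append_left _ _ i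
    have h2 : Fin.castAdd 0 i = i := Fin.ext rfl
    rwa [h2] at h1
  rw [hxy]

lemma conv_tsum (a b g : ℕ → ℝ≥0∞) :
    (∑' p : ℕ × ℕ, a p.1 * b p.2 * g (p.1 + p.2))
      = ∑' k, (∑ n ∈ Finset.range (k + 1), a n * b (k - n)) * g k := by
  have h1 : ∀ n m : ℕ, a n * b m * g (n + m)
      = ∑' k, if n + m = k then a n * b m * g k else 0 := by
    intro n m
    rw [tsum_eq_single (n + m) (fun k hk => if_neg fun hc => hk hc.symm)]
    simp
  have h2 : ∀ k n : ℕ, (∑' m, if n + m = k then a n * b m * g k else 0)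
      = if n ≤ k then a n * b (k - n) * g k else 0 := by
    intro k n
    by_cases hnk : n ≤ k
    · rw [if_pos hnk, tsum_eq_single (k - n) (fun m hm => if_neg (by omega)),
        if_pos (by omega)]
    · rw [if_neg hnk]
      have hz : ∀ m : ℕ, (if n + m = k then a n * b m * g k else 0) = 0 :=
        fun m => if_neg (by omega)
      simp_rw [hz]
      exact tsum_zero
  have h3 : ∀ k : ℕ, (∑' n, if n ≤ k then a n * b (k - n) * g k else 0)
      = (∑ n ∈ Finset.range (k + 1), a n * b (k - n)) * g k := by
    intro k
    rw [tsum_eq_sum (s := Finset.range (k + 1))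
      (fun n hn => if_neg (by simp at hn; omega)), Finset.sum_mul]
    exact Finset.sum_congr rfl fun n hn =>
      by rw [if_pos (by simp at hn; omega), mul_assoc]
  calc ∑' p : ℕ × ℕ, a p.1 * b p.2 * g (p.1 + p.2)
      = ∑' (n) (m), a n * b m * g (n + m) := ENNReal.tsum_prod'
    _ = ∑' (n) (m) (k), if n + m = k then a n * b m * g k else 0 := by
        exact tsum_congr fun n => tsum_congr fun m => h1 n m
    _ = ∑' (n) (k) (m), if n + m = k then a n * b m * g k else 0 :=
        tsum_congr fun n => ENNReal.tsum_comm
    _ = ∑' (k) (n) (m), if n + m = k then a n * b m * g k else 0 := ENNReal.tsum_comm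
    _ = ∑' (k) (n), if n ≤ k then a n * b (k - n) * g k else 0 :=
        tsum_congr fun k => tsum_congr fun n => h2 k n
    _ = ∑' k, (∑ n ∈ Finset.range (k + 1), a n * b (k - n)) * g k :=
        tsum_congr fun k => h3 k

lemma pw_conv {γ δ : ℝ} (hγ : 0 ≤ γ) (hδ : 0 ≤ δ) (k : ℕ) :
    (∑ n ∈ Finset.range (k + 1), pw γ n * pw δ (k - n)) = pw (γ + δ) k := by
  have key : ∀ n ∈ Finset.range (k + 1),
      pw γ n * pw δ (k - n) = ENNReal.ofReal
        (exp (-γ) * γ ^ n / n.factorial *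
          (exp (-δ) * δ ^ (k - n) / (k - n).factorial)) := fun n _ =>
    (ENNReal.ofReal_mul (pois_nonneg hγ n)).symm
  rw [Finset.sum_congr rfl key,
    ← ENNReal.ofReal_sum_of_nonneg (fun i _ => by positivity)]
  unfold pw
  congr 1
  have hterm : ∀ n ∈ Finset.range (k + 1),
      exp (-γ) * γ ^ n / n.factorial * (exp (-δ) * δ ^ (k - n) / (k - n).factorial)
      = exp (-(γ + δ)) / k.factorial * (γ ^ n * δ ^ (k - n) * (k.choose n)) := by
    intro n hn
    have hn' : n ≤ k := by simp at hn; omega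
    rw [Nat.cast_choose ℝ hn']
    have h1 : (n.factorial : ℝ) ≠ 0 := Nat.cast_ne_zero.2 n.factorial_ne_zero
    have h2 : (((k - n).factorial : ℕ) : ℝ) ≠ 0 :=
      Nat.cast_ne_zero.2 (k - n).factorial_ne_zero
    have h3 : ((k.factorial : ℕ) : ℝ) ≠ 0 := Nat.cast_ne_zero.2 k.factorial_ne_zero
    rw [neg_add, Real.exp_add]
    field_simp
  rw [Finset.sum_congr rfl hterm, ← Finset.mul_sum, ← add_pow]
  ring

lemma exists_coupling (β h γ δ : ℝ) (hγ : 0 ≤ γ) (hδ : 0 ≤ δ)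
    (ν : Measure I01) [IsProbabilityMeasure ν] :
    ∃ pr : Measure (I01 × I01), IsProbabilityMeasure pr ∧
      pr.fst = Tmap β h γ ν ∧ pr.snd = Tmap β h (γ + δ) ν ∧
      ∫ p, |(p.1 : ℝ) - (p.2 : ℝ)| ∂pr ≤ δ := by
  classical
  set Q : ℕ → ℕ → Measure (I01 × I01) := fun n m =>
    Measure.map (fun q : (Fin n → I01) × (Fin m → I01) =>
        (Tval β h q.1, Tval β h (Fin.append q.1 q.2)))
      ((Measure.pi fun _ : Fin n => ν).prod (Measure.pi fun _ : Fin m => ν)) with hQ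
  have hQmeas : ∀ n m : ℕ, Measurable (fun q : (Fin n → I01) × (Fin m → I01) =>
      (Tval β h q.1, Tval β h (Fin.append q.1 q.2))) := fun n m =>
    ((measurable_Tval β h n).comp measurable_fst).prodMk
      ((measurable_Tval β h (n + m)).comp (measurable_append n m))
  have hQprob : ∀ n m : ℕ, IsProbabilityMeasure (Q n m) := fun n m =>
    Measure.isProbabilityMeasure_map (hQmeas n m).aemeasurable
  have hQfst : ∀ n m : ℕ, (Q n m).fst = Mnu β h ν n := by
    intro n m
    have hY : Measurable (fun q : (Fin n → I01) × (Fin m → I01) =>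
        Tval β h (Fin.append q.1 q.2)) :=
      (measurable_Tval β h (n + m)).comp (measurable_append n m)
    have hX : Measurable (fun q : (Fin n → I01) × (Fin m → I01) => Tval β h q.1) :=
      (measurable_Tval β h n).comp measurable_fst
    simp only [hQ]
    rw [Measure.fst_map_prodMk hY]
    have hcomp : (fun q : (Fin n → I01) × (Fin m → I01) => Tval β h q.1)
        = (fun x : Fin n → I01 => Tval β h x) ∘ Prod.fst := rfl
    rw [hcomp, ← Measure.map_map (measurable_Tval β h n) measurable_fst]
    have hfstm : Measure.map Prod.fst
        ((Measure.pi fun _ : Fin n => ν).prod (Measure.pi fun _ : Fin m => ν))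
        = Measure.pi fun _ : Fin n => ν := Measure.fst_prod
    rw [hfstm]
    rfl
  have hQsnd : ∀ n m : ℕ, (Q n m).snd = Mnu β h ν (n + m) := by
    intro n m
    have hX : Measurable (fun q : (Fin n → I01) × (Fin m → I01) => Tval β h q.1) :=
      (measurable_Tval β h n).comp measurable_fst
    simp only [hQ]
    rw [Measure.snd_map_prodMk hX]
    have hcomp : (fun q : (Fin n → I01) × (Fin m → I01) => Tval β h (Fin.append q.1 q.2))
        = (fun x : Fin (n + m) → I01 => Tval β h x) ∘
          (fun q : (Fin n → I01) × (Fin m → I01) => Fin.append q.1 q.2) := rfl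
    rw [hcomp, ← Measure.map_map (measurable_Tval β h (n + m)) (measurable_append n m),
      map_append n m ν]
    rfl
  set pr : Measure (I01 × I01) :=
    Measure.sum fun p : ℕ × ℕ => (pw γ p.1 * pw δ p.2) • Q p.1 p.2 with hpr
  have hprob : IsProbabilityMeasure pr := by
    constructor
    rw [hpr, Measure.sum_apply _ MeasurableSet.univ]
    have : ∀ p : ℕ × ℕ, ((pw γ p.1 * pw δ p.2) • Q p.1 p.2) univ
        = pw γ p.1 * pw δ p.2 := by
      intro p
      rw [Measure.smul_apply, (hQprob p.1 p.2).measure_univ, smul_eq_mul, mul_one]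
    rw [tsum_congr this, ENNReal.tsum_prod']
    calc (∑' (n) (m), pw γ n * pw δ m) = ∑' n, pw γ n * ∑' m, pw δ m :=
          tsum_congr fun n => ENNReal.tsum_mul_left
      _ = (∑' n, pw γ n) * ∑' m, pw δ m := ENNReal.tsum_mul_right
      _ = 1 := by rw [pw_tsum hδ, pw_tsum hγ, one_mul]
  have hfst : pr.fst = Tmap β h γ ν := by
    rw [Tmap_eq β h γ ν]
    ext s hs
    rw [Measure.fst_apply hs, hpr, Measure.sum_apply _ (measurable_fst hs),
      Measure.sum_apply _ hs]
    have hterm : ∀ p : ℕ × ℕ, ((pw γ p.1 * pw δ p.2) • Q p.1 p.2) (Prod.fst ⁻¹' s)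
        = pw δ p.2 * (pw γ p.1 * Mnu β h ν p.1 s) := by
      intro p
      rw [Measure.smul_apply, smul_eq_mul, ← Measure.fst_apply hs, hQfst p.1 p.2]
      ring
    rw [tsum_congr hterm, ENNReal.tsum_prod']
    calc (∑' (n) (m), pw δ m * (pw γ n * Mnu β h ν n s))
        = ∑' n, (∑' m, pw δ m) * (pw γ n * Mnu β h ν n s) :=
          tsum_congr fun n => ENNReal.tsum_mul_right
      _ = ∑' n, (pw γ n • Mnu β h ν n) s := by
          rw [pw_tsum hδ]
          exact tsum_congr fun n => by rw [one_mul, Measure.smul_apply, smul_eq_mul]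
  have hsnd : pr.snd = Tmap β h (γ + δ) ν := by
    rw [Tmap_eq β h (γ + δ) ν]
    ext s hs
    rw [Measure.snd_apply hs, hpr, Measure.sum_apply _ (measurable_snd hs),
      Measure.sum_apply _ hs]
    have hterm : ∀ p : ℕ × ℕ, ((pw γ p.1 * pw δ p.2) • Q p.1 p.2) (Prod.snd ⁻¹' s)
        = pw γ p.1 * pw δ p.2 * Mnu β h ν (p.1 + p.2) s := by
      intro p
      rw [Measure.smul_apply, smul_eq_mul, ← Measure.snd_apply hs, hQsnd p.1 p.2]
    rw [tsum_congr hterm, conv_tsum (pw γ) (pw δ) (fun k => Mnu β h ν k s)]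
    refine tsum_congr fun k => ?_
    rw [pw_conv hγ hδ k, Measure.smul_apply, smul_eq_mul]
  refine ⟨pr, hprob, hfst, hsnd, ?_⟩
  have hcont : Continuous (fun p : I01 × I01 => |(p.1 : ℝ) - (p.2 : ℝ)|) :=
    ((continuous_subtype_val.comp continuous_fst).sub
      (continuous_subtype_val.comp continuous_snd)).abs
  have hnn : 0 ≤ᵐ[pr] fun p : I01 × I01 => |(p.1 : ℝ) - (p.2 : ℝ)| :=
    Filter.Eventually.of_forall fun p => abs_nonneg _
  rw [integral_eq_lintegral_of_nonneg_ae hnn hcont.aestronglyMeasurable]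
  have hkey : ∀ n m : ℕ,
      (∫⁻ p, ENNReal.ofReal |(p.1 : ℝ) - (p.2 : ℝ)| ∂(Q n m))
        ≤ if m = 0 then 0 else 1 := by
    intro n m
    rw [hQ, lintegral_map (hcont.measurable.ennreal_ofReal) (hQmeas n m)]
    rcases Nat.eq_zero_or_pos m with hm | hm
    · subst hm
      rw [if_pos rfl]
      have heq : ∀ q : (Fin n → I01) × (Fin 0 → I01),
          ENNReal.ofReal |((Tval β h q.1 : I01) : ℝ)
            - ((Tval β h (Fin.append q.1 q.2) : I01) : ℝ)| = 0 := by
        intro q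
        rw [Tval_append_zero β h q.1 q.2, sub_self, abs_zero, ENNReal.ofReal_zero]
      calc (∫⁻ q, ENNReal.ofReal |((Tval β h q.1 : I01) : ℝ)
            - ((Tval β h (Fin.append q.1 q.2) : I01) : ℝ)|
            ∂((Measure.pi fun _ : Fin n => ν).prod (Measure.pi fun _ : Fin 0 => ν)))
          = ∫⁻ _, 0 ∂((Measure.pi fun _ : Fin n => ν).prod
              (Measure.pi fun _ : Fin 0 => ν)) := lintegral_congr heq
        _ = 0 := lintegral_zero
        _ ≤ 0 := le_refl _
    · rw [if_neg (by omega)]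
      calc (∫⁻ q, ENNReal.ofReal |((Tval β h q.1 : I01) : ℝ)
            - ((Tval β h (Fin.append q.1 q.2) : I01) : ℝ)|
            ∂((Measure.pi fun _ : Fin n => ν).prod (Measure.pi fun _ : Fin m => ν)))
          ≤ ∫⁻ _, 1 ∂((Measure.pi fun _ : Fin n => ν).prod
              (Measure.pi fun _ : Fin m => ν)) := by
            refine lintegral_mono fun q => ?_
            rw [show (1 : ℝ≥0∞) = ENNReal.ofReal 1 by simp]
            refine ENNReal.ofReal_le_ofReal ?_
            have ha := (Tval β h q.1).2
            have hb := (Tval β h (Fin.append q.1 q.2)).2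
            simp only [Set.mem_Icc] at ha hb
            rw [abs_sub_le_iff]
            constructor <;> linarith [ha.1, ha.2, hb.1, hb.2]
        _ = 1 := by rw [lintegral_one, measure_univ]
  have hbound : (∫⁻ p, ENNReal.ofReal |(p.1 : ℝ) - (p.2 : ℝ)| ∂pr)
      ≤ ENNReal.ofReal δ := by
    rw [hpr, lintegral_sum_measure]
    have hstep : ∀ p : ℕ × ℕ,
        (∫⁻ x, ENNReal.ofReal |(x.1 : ℝ) - (x.2 : ℝ)|
          ∂((pw γ p.1 * pw δ p.2) • Q p.1 p.2))
        ≤ pw γ p.1 * (pw δ p.2 * (if p.2 = 0 then 0 else 1)) := by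
      intro p
      rw [lintegral_smul_measure, smul_eq_mul, mul_assoc]
      exact mul_le_mul_right (mul_le_mul_right (hkey p.1 p.2) _) _
    refine le_trans (ENNReal.tsum_le_tsum hstep) ?_
    rw [ENNReal.tsum_prod']
    have hnn' : ∀ m : ℕ, 0 ≤ (if m = 0 then 0 else exp (-δ) * δ ^ m / m.factorial) := by
      intro m
      split
      · exact le_refl 0
      · exact pois_nonneg hδ m
    have hsumm : Summable (fun m : ℕ =>
        if m = 0 then 0 else exp (-δ) * δ ^ m / m.factorial) := by
      refine Summable.of_nonneg_of_le hnn' (fun m => ?_) (summable_pois δ)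
      split
      · exact pois_nonneg hδ m
      · exact le_refl _
    have hB : (∑' m, pw δ m * (if m = 0 then 0 else 1))
        = ENNReal.ofReal (1 - exp (-δ)) := by
      have hmm : ∀ m : ℕ, pw δ m * (if m = 0 then 0 else 1)
          = ENNReal.ofReal (if m = 0 then 0
              else exp (-δ) * δ ^ m / m.factorial) := by
        intro m
        by_cases hm0 : m = 0 <;> simp [hm0, pw]
      rw [tsum_congr hmm, ← ENNReal.ofReal_tsum_of_nonneg hnn' hsumm]
      congr 1
      have h0 := (summable_pois δ).tsum_eq_zero_add
      have h1 := hsumm.tsum_eq_zero_add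
      rw [tsum_pois_real δ] at h0
      have h2 : ∀ n : ℕ, (if n + 1 = 0 then (0 : ℝ)
          else exp (-δ) * δ ^ (n + 1) / (n + 1).factorial)
          = exp (-δ) * δ ^ (n + 1) / (n + 1).factorial :=
        fun n => if_neg (Nat.succ_ne_zero n)
      simp only [h2, eq_self_iff_true, if_true, pow_zero, Nat.factorial_zero,
        Nat.cast_one, mul_one, div_one, zero_add] at h0 h1
      linarith
    have hfin : (∑' (n) (m : ℕ), pw γ n * (pw δ m * (if m = 0 then 0 else 1)))
        = ENNReal.ofReal (1 - exp (-δ)) := by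
      calc (∑' (n) (m : ℕ), pw γ n * (pw δ m * (if m = 0 then 0 else 1)))
          = ∑' n, pw γ n * ∑' m, pw δ m * (if m = 0 then 0 else 1) :=
            tsum_congr fun n => ENNReal.tsum_mul_left
        _ = (∑' n, pw γ n) * ∑' m, pw δ m * (if m = 0 then 0 else 1) :=
            ENNReal.tsum_mul_right
        _ = ENNReal.ofReal (1 - exp (-δ)) := by rw [pw_tsum hγ, hB, one_mul]
    rw [hfin]
    exact ENNReal.ofReal_le_ofReal (by linarith [Real.add_one_le_exp (-δ)])
  calc (∫⁻ p, ENNReal.ofReal |(p.1 : ℝ) - (p.2 : ℝ)| ∂pr).toReal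
      ≤ (ENNReal.ofReal δ).toReal := ENNReal.toReal_mono ENNReal.ofReal_ne_top hbound
    _ = δ := ENNReal.toReal_ofReal hδ

end CouplingAux

end CouplingAux

/-- For all `β, h ≥ 0`, all `γ, γ' ≥ 0` and every Borel probability measure `ν`
on `[0,1]`, `d(T_{β,h,γ}(ν), T_{β,h,γ'}(ν)) ≤ |γ − γ'|`. -/
theorem T_operator_gamma_continuity (β h γ γ' : ℝ) (hβ : 0 ≤ β) (hh : 0 ≤ h)
    (hγ : 0 ≤ γ) (hγ' : 0 ≤ γ') (ν : Measure I01) (hν : IsProbabilityMeasure ν) :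
    MKdist (Tmap β h γ ν) (Tmap β h γ' ν) ≤ |γ - γ'| := by
  haveI := hν
  have hbdd : BddBelow {c | ∃ pr : Measure (I01 × I01), IsProbabilityMeasure pr ∧
      pr.fst = Tmap β h γ ν ∧ pr.snd = Tmap β h γ' ν ∧
      c = ∫ p, |(p.1 : ℝ) - (p.2 : ℝ)| ∂pr} := by
    refine ⟨0, fun c hc => ?_⟩
    obtain ⟨pr, _, _, _, rfl⟩ := hc
    exact integral_nonneg fun p => abs_nonneg _
  have hcont : Continuous (fun p : I01 × I01 => |(p.1 : ℝ) - (p.2 : ℝ)|) :=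
    ((continuous_subtype_val.comp continuous_fst).sub
      (continuous_subtype_val.comp continuous_snd)).abs
  rcases le_total γ γ' with hle | hle
  · obtain ⟨pr, hp, h1, h2, h3⟩ :=
      CouplingAux.exists_coupling β h γ (γ' - γ) hγ (by linarith) ν
    have he : γ + (γ' - γ) = γ' := by ring
    rw [he] at h2
    refine le_trans (csInf_le hbdd ⟨pr, hp, h1, h2, rfl⟩) ?_
    calc (∫ p, |(p.1 : ℝ) - (p.2 : ℝ)| ∂pr) ≤ γ' - γ := h3
      _ = |γ - γ'| := by rw [abs_sub_comm, abs_of_nonneg (by linarith)]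
  · obtain ⟨pr, hp, h1, h2, h3⟩ :=
      CouplingAux.exists_coupling β h γ' (γ - γ') hγ' (by linarith) ν
    have he : γ' + (γ - γ') = γ := by ring
    rw [he] at h2
    have hpswap : IsProbabilityMeasure (pr.map Prod.swap) :=
      Measure.isProbabilityMeasure_map measurable_swap.aemeasurable
    have hint : (∫ p, |(p.1 : ℝ) - (p.2 : ℝ)| ∂(pr.map Prod.swap))
        = ∫ p, |(p.1 : ℝ) - (p.2 : ℝ)| ∂pr := by
      rw [integral_map measurable_swap.aemeasurable hcont.aestronglyMeasurable]
      exact integral_congr_ae (Filter.Eventually.of_forall fun p => by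
        simp [Prod.swap, abs_sub_comm])
    refine le_trans (csInf_le hbdd ⟨pr.map Prod.swap, hpswap, ?_, ?_, rfl⟩) ?_
    · rw [Measure.fst_map_swap, h2]
    · rw [Measure.snd_map_swap, h1]
    · calc (∫ p, |(p.1 : ℝ) - (p.2 : ℝ)| ∂(pr.map Prod.swap))
          = ∫ p, |(p.1 : ℝ) - (p.2 : ℝ)| ∂pr := hint
        _ ≤ γ - γ' := h3
        _ = |γ - γ'| := by rw [abs_of_nonneg (by linarith)]
end

section
/- Let N ≥ 2, β, h ≥ 0 and 0 ≤ γ ≤ N. Then, almost surely in the disorder, the Gibbs magnetization of the last spin satisfies ⟨σ_N⟩ = (1 + ⟨exp(h − β·Σ_{i≤N−1} g_{iN} σ_i)⟩_−^{−1})^{−1}, where ⟨·⟩_− is the quenched Gibbs expectation of the (N−1)-spin system with parameters β, h and dilution parameter γ' = (N−1)γ/N, built from the same disorder variables g_{ij}, 1 ≤ i < j ≤ N−1. -/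
open MeasureTheory Real

/-- cavity identity for the magnetization of the last spin: for a system of
`N+1 ≥ 2` spins, `β, h ≥ 0` and `0 ≤ γ ≤ N+1`, almost surely in the disorder,
`⟨σ_{N+1}⟩ = (1 + ⟨exp(h − β Σ_{i≤N} g_{i,N+1} σ_i)⟩_-⁻¹)⁻¹`, where `⟨·⟩_-` is the quenched
Gibbs expectation of the `N`-spin system (dilution `γ' = Nγ/(N+1)`, same edge probability)
built from the same disorder variables `g_{ij}`, `i < j ≤ N`. -/
theorem cavity_magnetization (N : ℕ) (hN : 1 ≤ N) (β h γ : ℝ)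
    (hβ : 0 ≤ β) (hh : 0 ≤ h) (hγ0 : 0 ≤ γ) (hγ : γ ≤ (N : ℝ) + 1) :
    ∀ᵐ g ∂(disorderMeasure (N + 1) γ),
      gibbs (N + 1) β h g (fun σ => b2r (σ (Fin.last N))) =
      (1 + (gibbs N β h (fun i j => g i.castSucc j.castSucc)
        (fun σ => Real.exp (h - β * ∑ i : Fin N,
          (if g i.castSucc (Fin.last N) = true then b2r (σ i) else 0))))⁻¹)⁻¹ := by
  refine Filter.Eventually.of_forall fun g => ?_
  set g' : Fin N → Fin N → Bool := fun i j => g i.castSucc j.castSucc with hg'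
  set A : (Fin N → Bool) → ℝ := fun τ => ∑ i : Fin N,
    (if g i.castSucc (Fin.last N) = true then b2r (τ i) else 0) with hA
  have key : ∀ (τ : Fin N → Bool) (s : Bool),
      Ham (N + 1) β h g (Fin.snoc τ s) = Ham N β h g' τ + b2r s * (h - β * A τ) := by
    intro τ s
    have h1 : ∑ i : Fin (N + 1), b2r ((Fin.snoc τ s : Fin (N + 1) → Bool) i) = (∑ i : Fin N, b2r (τ i)) + b2r s := by
      rw [Fin.sum_univ_castSucc]; simp
    have hnl : ∀ j : Fin N, ¬ (Fin.last N < Fin.castSucc j) := fun j =>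
      (Fin.castSucc_lt_last j).asymm
    have h2 : (∑ i : Fin (N + 1), ∑ j : Fin (N + 1),
        (if i < j ∧ g i j = true then b2r ((Fin.snoc τ s : Fin (N + 1) → Bool) i) * b2r ((Fin.snoc τ s : Fin (N + 1) → Bool) j) else 0))
        = (∑ i : Fin N, ∑ j : Fin N,
            (if i < j ∧ g' i j = true then b2r (τ i) * b2r (τ j) else 0)) + A τ * b2r s := by
      simp only [Fin.sum_univ_castSucc, Fin.snoc_castSucc, Fin.snoc_last,
        Fin.castSucc_lt_castSucc_iff, Fin.castSucc_lt_last, true_and, hnl, lt_irrefl,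
        false_and, if_false, add_zero, Finset.sum_const_zero]
      rw [Finset.sum_add_distrib, hA]
      simp only [Finset.sum_mul, ite_mul, zero_mul, hg']
    simp only [Ham, h1, h2]
    ring
  set S : ℝ := ∑ τ : Fin N → Bool, Real.exp (h - β * A τ) * Real.exp (Ham N β h g' τ) with hS
  have hZpos : 0 < Zfun N β h g' := Finset.sum_pos (fun τ _ => Real.exp_pos _) ⟨fun _ => true, Finset.mem_univ _⟩
  have hSpos : 0 < S := Finset.sum_pos (fun τ _ => mul_pos (Real.exp_pos _) (Real.exp_pos _)) ⟨fun _ => true, Finset.mem_univ _⟩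
  have hsum : ∀ (f : (Fin (N + 1) → Bool) → ℝ),
      ∑ σ : Fin (N + 1) → Bool, f σ = ∑ p : Bool × (Fin N → Bool), f (Fin.snoc p.2 p.1) := by
    intro f
    exact (Fintype.sum_equiv (Fin.snocEquiv fun _ => Bool) _ _ (fun p => rfl)).symm
  have hZ : Zfun (N + 1) β h g = S + Zfun N β h g' := by
    rw [Zfun, hsum, Fintype.sum_prod_type, Fintype.sum_bool, Zfun, hS]
    congr 1
    · exact Finset.sum_congr rfl fun τ _ => by
        rw [key]; simp [b2r, Real.exp_add]; ring
    · exact Finset.sum_congr rfl fun τ _ => by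
        rw [key]; simp [b2r]
  have hNum : (∑ σ : Fin (N + 1) → Bool, b2r (σ (Fin.last N)) * Real.exp (Ham (N + 1) β h g σ)) = S := by
    rw [hsum, Fintype.sum_prod_type, Fintype.sum_bool, hS]
    have e1 : ∀ τ : Fin N → Bool,
        b2r ((Fin.snoc τ true : Fin (N + 1) → Bool) (Fin.last N)) *
          Real.exp (Ham (N + 1) β h g (Fin.snoc τ true)) =
        Real.exp (h - β * A τ) * Real.exp (Ham N β h g' τ) := fun τ => by
      rw [key]; simp [b2r, Real.exp_add]; ring
    have e2 : ∀ τ : Fin N → Bool,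
        b2r ((Fin.snoc τ false : Fin (N + 1) → Bool) (Fin.last N)) *
          Real.exp (Ham (N + 1) β h g (Fin.snoc τ false)) = 0 := fun τ => by
      simp [b2r]
    simp only [e1, e2, Finset.sum_const_zero, add_zero]
  have hRHS : gibbs N β h g' (fun σ => Real.exp (h - β * A σ)) = S / Zfun N β h g' := by
    rw [gibbs, hS]
  show gibbs (N + 1) β h g (fun σ => b2r (σ (Fin.last N))) =
      (1 + (gibbs N β h g' (fun σ => Real.exp (h - β * A σ)))⁻¹)⁻¹
  rw [gibbs, hNum, hZ, hRHS]
  have hZne : Zfun N β h g' ≠ 0 := hZpos.ne'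
  have hSne : S ≠ 0 := hSpos.ne'
  rw [inv_div]
  have e3 : 1 + Zfun N β h g' / S = (S + Zfun N β h g') / S := by field_simp
  rw [e3, inv_div]
end

section
/- Let N ≥ 2, β, h ≥ 0 and 0 ≤ γ ≤ N, and let F_N(β,h,γ) = E log Z_N(β,h,γ) denote the unnormalized free energy. Then F_N(β,h,γ) − F_{N−1}(β,h,(N−1)γ/N) = E log(1 + ⟨exp(h − β·Σ_{i≤N−1} g_{iN} σ_i)⟩_−), where ⟨·⟩_− is the quenched Gibbs expectation of the (N−1)-spin system with parameters β, h and dilution parameter γ' = (N−1)γ/N, built from the same disorder variables g_{ij}, 1 ≤ i < j ≤ N−1. -/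
open MeasureTheory Real

section cavityAux

open MeasureTheory Real

lemma bern_prob {p : ℝ} (h0 : 0 ≤ p) (h1 : p ≤ 1) : IsProbabilityMeasure (bern p) := by
  constructor
  simp [bern, ← ENNReal.ofReal_add (by linarith : (0:ℝ) ≤ 1 - p) h0]

lemma map_castSucc_pi {X Y : Type*} [MeasurableSpace X] [MeasurableSpace Y] (n : ℕ)
    {φ : X → Y} (hφ : Measurable φ) (ν : Measure X) [IsProbabilityMeasure ν] :
    Measure.map (fun g : Fin (n+1) → X => fun i : Fin n => φ (g i.castSucc))
      (Measure.pi fun _ => ν) = Measure.pi fun _ : Fin n => Measure.map φ ν := by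
  haveI : IsProbabilityMeasure (Measure.map φ ν) := Measure.isProbabilityMeasure_map hφ.aemeasurable
  refine Measure.pi_eq (μ := fun _ : Fin n => Measure.map φ ν)
    (μ' := Measure.map (fun g : Fin (n+1) → X => fun i : Fin n => φ (g i.castSucc))
      (Measure.pi fun _ => ν)) (fun s hs => ?_) |>.symm
  have hF : Measurable (fun g : Fin (n+1) → X => fun i : Fin n => φ (g i.castSucc)) :=
    measurable_pi_lambda _ fun i => hφ.comp (measurable_pi_apply _)
  rw [Measure.map_apply hF (MeasurableSet.univ_pi hs)]
  have hpre : (fun g : Fin (n+1) → X => fun i : Fin n => φ (g i.castSucc)) ⁻¹' Set.pi Set.univ s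
      = Set.pi Set.univ (fun k : Fin (n+1) =>
          if h : (k : ℕ) < n then φ ⁻¹' s ⟨(k : ℕ), h⟩ else Set.univ) := by
    ext g
    simp only [Set.mem_preimage, Set.mem_pi, Set.mem_univ, true_implies]
    constructor
    · intro H k
      by_cases hk : (k : ℕ) < n
      · have hc : ((⟨(k : ℕ), hk⟩ : Fin n)).castSucc = k := by ext; simp
        rw [dif_pos hk]
        have := H ⟨(k : ℕ), hk⟩
        rw [hc] at this
        exact this
      · rw [dif_neg hk]; trivial
    · intro H i
      have hk : ((i.castSucc : Fin (n+1)) : ℕ) < n := by simpa using i.isLt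
      have := H i.castSucc
      rw [dif_pos hk] at this
      have he : (⟨((i.castSucc : Fin (n+1)) : ℕ), hk⟩ : Fin n) = i := by ext; simp
      rwa [he] at this
  rw [hpre, Measure.pi_pi, Fin.prod_univ_castSucc]
  have hlast : ¬ (((Fin.last n) : ℕ) < n) := by simp
  rw [dif_neg hlast, measure_univ, mul_one]
  refine Finset.prod_congr rfl fun i _ => ?_
  have hk : ((i.castSucc : Fin (n+1)) : ℕ) < n := by simpa using i.isLt
  rw [dif_pos hk]
  have he : (⟨((i.castSucc : Fin (n+1)) : ℕ), hk⟩ : Fin n) = i := by ext; simp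
  rw [he, Measure.map_apply hφ (hs i)]

lemma Zfun_pos (N : ℕ) (β h : ℝ) (g : Fin N → Fin N → Bool) : 0 < Zfun N β h g :=
  Finset.sum_pos (fun σ _ => Real.exp_pos _) Finset.univ_nonempty

lemma Ham_snoc (N : ℕ) (β h : ℝ) (g : Fin (N+1) → Fin (N+1) → Bool) (σ : Fin N → Bool)
    (b : Bool) :
    Ham (N+1) β h g (Fin.snoc σ b) =
      Ham N β h (fun i j => g i.castSucc j.castSucc) σ +
        (h - β * ∑ i : Fin N, (if g i.castSucc (Fin.last N) = true then b2r (σ i) else 0))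
          * b2r b := by
  have hnl : ∀ j : Fin N, ¬ (Fin.last N < j.castSucc) := fun j => (Fin.castSucc_lt_last j).asymm
  simp only [Ham, Fin.sum_univ_castSucc, Fin.snoc_castSucc, Fin.snoc_last,
    Fin.castSucc_lt_castSucc_iff, Fin.castSucc_lt_last, true_and, hnl, false_and, if_false,
    lt_irrefl, Finset.sum_const_zero, add_zero]
  have hrw : ∀ i : Fin N,
      (if g i.castSucc (Fin.last N) = true then b2r (σ i) * b2r b else 0) =
      (if g i.castSucc (Fin.last N) = true then b2r (σ i) else 0) * b2r b := by
    intro i; split <;> simp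
  rw [Finset.sum_add_distrib, Finset.sum_congr rfl (fun i _ => hrw i), ← Finset.sum_mul]
  ring

def boolSnocEquiv (N : ℕ) : (Fin N → Bool) × Bool ≃ (Fin (N+1) → Bool) where
  toFun p := Fin.snoc p.1 p.2
  invFun g := (fun i => g i.castSucc, g (Fin.last N))
  left_inv p := by
    refine Prod.ext ?_ ?_
    · funext i; simp
    · simp
  right_inv g := Fin.snoc_init_self g

lemma Zfun_succ (N : ℕ) (β h : ℝ) (g : Fin (N+1) → Fin (N+1) → Bool) :
    Zfun (N+1) β h g = Zfun N β h (fun i j => g i.castSucc j.castSucc) +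
      ∑ σ : Fin N → Bool,
        Real.exp (h - β * ∑ i : Fin N,
            (if g i.castSucc (Fin.last N) = true then b2r (σ i) else 0)) *
          Real.exp (Ham N β h (fun i j => g i.castSucc j.castSucc) σ) := by
  classical
  rw [show Zfun (N+1) β h g = ∑ σ : Fin (N+1) → Bool, Real.exp (Ham (N+1) β h g σ) from rfl,
    ← Equiv.sum_comp (boolSnocEquiv N) (fun σ => Real.exp (Ham (N+1) β h g σ))]
  simp only [show ∀ p, boolSnocEquiv N p = Fin.snoc p.1 p.2 from fun _ => rfl, Fintype.sum_prod_type, Fintype.sum_bool, Ham_snoc]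
  rw [Finset.sum_add_distrib, Zfun]
  have hb1 : b2r true = 1 := rfl
  have hb0 : b2r false = 0 := rfl
  simp only [hb1, hb0, mul_one, mul_zero, add_zero]
  rw [add_comm]
  congr 1
  refine Finset.sum_congr rfl fun σ _ => ?_
  rw [Real.exp_add, mul_comm]

lemma log_helper (Z S : ℝ) (hZ : 0 < Z) (hS : 0 ≤ S) :
    Real.log (Z + S) = Real.log Z + Real.log (1 + S / Z) := by
  have h1 : 0 < 1 + S / Z := by
    have := div_nonneg hS hZ.le; linarith
  rw [← Real.log_mul hZ.ne' h1.ne']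
  congr 1
  field_simp

lemma log_Z_split (N : ℕ) (β h : ℝ) (g : Fin (N+1) → Fin (N+1) → Bool) :
    Real.log (Zfun (N+1) β h g) =
      Real.log (Zfun N β h (fun i j => g i.castSucc j.castSucc)) +
      Real.log (1 + gibbs N β h (fun i j => g i.castSucc j.castSucc)
        (fun σ => Real.exp (h - β * ∑ i : Fin N,
          (if g i.castSucc (Fin.last N) = true then b2r (σ i) else 0)))) := by
  rw [Zfun_succ]
  have hS : 0 ≤ ∑ σ : Fin N → Bool,
      Real.exp (h - β * ∑ i : Fin N,
          (if g i.castSucc (Fin.last N) = true then b2r (σ i) else 0)) *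
        Real.exp (Ham N β h (fun i j => g i.castSucc j.castSucc) σ) :=
    Finset.sum_nonneg fun σ _ => mul_nonneg (Real.exp_pos _).le (Real.exp_pos _).le
  rw [log_helper _ _ (Zfun_pos _ _ _ _) hS]
  rfl

end cavityAux

/-- cavity step for the unnormalized free energy: for a system of
`N+1 ≥ 2` spins, `β, h ≥ 0`, `0 ≤ γ ≤ N+1`,
`F_{N+1}(β,h,γ) − F_N(β,h,Nγ/(N+1)) = E log(1 + ⟨exp(h − β Σ_{i≤N} g_{i,N+1} σ_i)⟩_-)`,
where `⟨·⟩_-` is the quenched Gibbs expectation of the `N`-spin system with dilution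
`γ' = Nγ/(N+1)` (same edge probability `γ/(N+1)`), built from the same disorder
variables `g_{ij}`, `i < j ≤ N`. -/
theorem cavity_free_energy_step (N : ℕ) (hN : 1 ≤ N) (β h γ : ℝ)
    (hβ : 0 ≤ β) (hh : 0 ≤ h) (hγ0 : 0 ≤ γ) (hγ : γ ≤ (N : ℝ) + 1) :
    Fenergy (N + 1) β h γ - Fenergy N β h ((N : ℝ) * γ / ((N : ℝ) + 1)) =
      ∫ g, Real.log (1 + gibbs N β h (fun i j => g i.castSucc j.castSucc)
        (fun σ => Real.exp (h - β * ∑ i : Fin N,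
          (if g i.castSucc (Fin.last N) = true then b2r (σ i) else 0))))
        ∂(disorderMeasure (N + 1) γ) := by
  classical
  have hN1 : (0:ℝ) < (N:ℝ) + 1 := by positivity
  have hNne : (N:ℝ) ≠ 0 := by
    exact_mod_cast Nat.one_le_iff_ne_zero.mp hN
  set p : ℝ := γ / ((N:ℝ) + 1) with hp
  have hp0 : 0 ≤ p := div_nonneg hγ0 hN1.le
  have hp1 : p ≤ 1 := by rw [hp, div_le_one hN1]; exact hγ
  haveI hb : IsProbabilityMeasure (bern p) := bern_prob hp0 hp1
  have hdm1 : disorderMeasure (N+1) γ =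
      Measure.pi fun _ : Fin (N+1) => Measure.pi fun _ : Fin (N+1) => bern p := by
    simp only [disorderMeasure, hp, Nat.cast_add, Nat.cast_one]
  have hdm2 : disorderMeasure N ((N : ℝ) * γ / ((N : ℝ) + 1)) =
      Measure.pi fun _ : Fin N => Measure.pi fun _ : Fin N => bern p := by
    have : (N : ℝ) * γ / ((N : ℝ) + 1) / (N : ℝ) = p := by
      rw [hp]; field_simp
    simp only [disorderMeasure, this]
  haveI : IsProbabilityMeasure (disorderMeasure (N+1) γ) := by
    rw [hdm1]; infer_instance
  have hmap : Measure.map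
      (fun g : Fin (N+1) → Fin (N+1) → Bool => fun i j : Fin N => g i.castSucc j.castSucc)
      (disorderMeasure (N+1) γ) = disorderMeasure N ((N : ℝ) * γ / ((N : ℝ) + 1)) := by
    rw [hdm1, hdm2]
    have hφ : Measurable (fun y : Fin (N+1) → Bool => fun j : Fin N => y j.castSucc) :=
      measurable_pi_lambda _ fun j => measurable_pi_apply _
    have inner : Measure.map (fun y : Fin (N+1) → Bool => fun j : Fin N => y j.castSucc)
        (Measure.pi fun _ : Fin (N+1) => bern p) = Measure.pi fun _ : Fin N => bern p := by
      simpa [Measure.map_id] using map_castSucc_pi N measurable_id (bern p)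
    have outer := map_castSucc_pi N hφ (Measure.pi fun _ : Fin (N+1) => bern p)
    rw [inner] at outer
    exact outer
  have key : ∀ g : Fin (N+1) → Fin (N+1) → Bool,
      Real.log (Zfun (N+1) β h g) =
        Real.log (Zfun N β h (fun i j => g i.castSucc j.castSucc)) +
        Real.log (1 + gibbs N β h (fun i j => g i.castSucc j.castSucc)
          (fun σ => Real.exp (h - β * ∑ i : Fin N,
            (if g i.castSucc (Fin.last N) = true then b2r (σ i) else 0)))) :=
    fun g => log_Z_split N β h g
  have h1 : Fenergy (N+1) β h γ =
      (∫ g, Real.log (Zfun N β h (fun i j => g i.castSucc j.castSucc))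
        ∂(disorderMeasure (N+1) γ)) +
      (∫ g, Real.log (1 + gibbs N β h (fun i j => g i.castSucc j.castSucc)
        (fun σ => Real.exp (h - β * ∑ i : Fin N,
          (if g i.castSucc (Fin.last N) = true then b2r (σ i) else 0))))
        ∂(disorderMeasure (N+1) γ)) := by
    rw [Fenergy]
    rw [show (fun g : Fin (N+1) → Fin (N+1) → Bool => Real.log (Zfun (N+1) β h g)) =
      fun g => Real.log (Zfun N β h (fun i j => g i.castSucc j.castSucc)) +
        Real.log (1 + gibbs N β h (fun i j => g i.castSucc j.castSucc)
          (fun σ => Real.exp (h - β * ∑ i : Fin N,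
            (if g i.castSucc (Fin.last N) = true then b2r (σ i) else 0))))
      from funext key]
    exact integral_add Integrable.of_finite Integrable.of_finite
  have h2 : (∫ g, Real.log (Zfun N β h (fun i j => g i.castSucc j.castSucc))
      ∂(disorderMeasure (N+1) γ)) = Fenergy N β h ((N : ℝ) * γ / ((N : ℝ) + 1)) := by
    rw [Fenergy, ← hmap, integral_map Measurable.of_discrete.aemeasurable
      Measurable.of_discrete.aestronglyMeasurable]
  rw [h1, h2]
  ring
end

section
/- Let n ∈ ℕ, p ∈ [0,1], β ≥ 0, let S be a Binomial(n,p)-distributed random variable and set α = n·p. Then E[S³·e^{βS}] ≤ (α³e^{3β} + 3α²e^{2β} + α·e^{β})·exp((e^{β}−1)·α). -/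
open Real

lemma nat_id (n k i : ℕ) (h : k + i ≤ n) :
    n.choose (k + i) * (k + i).descFactorial k = n.descFactorial k * (n - k).choose i := by
  rw [Nat.descFactorial_eq_factorial_mul_choose, Nat.descFactorial_eq_factorial_mul_choose]
  have h2 := Nat.choose_mul (n := n) (Nat.le_add_right k i)
  rw [Nat.add_sub_cancel_left] at h2
  calc n.choose (k + i) * (Nat.factorial k * (k + i).choose k)
      = Nat.factorial k * (n.choose (k + i) * (k + i).choose k) := by ring
    _ = Nat.factorial k * (n.choose k * (n - k).choose i) := by rw [h2]
    _ = Nat.factorial k * n.choose k * (n - k).choose i := by ring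

lemma sum_desc (n k : ℕ) (a b : ℝ) :
    ∑ s ∈ Finset.range (n + 1),
        (n.choose s : ℝ) * a ^ s * b ^ (n - s) * (s.descFactorial k : ℝ)
      = (n.descFactorial k : ℝ) * a ^ k * (a + b) ^ (n - k) := by
  by_cases hk : k ≤ n
  · have hsub : Finset.Ico k (n + 1) ⊆ Finset.range (n + 1) := by
      intro x hx; simp_all [Finset.mem_Ico, Finset.mem_range]
    rw [← Finset.sum_subset hsub (by
      intro x hx hnx
      simp only [Finset.mem_range] at hx
      simp only [Finset.mem_Ico] at hnx
      have : x < k := by omega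
      rw [Nat.descFactorial_eq_zero_iff_lt.mpr this]
      simp)]
    rw [Finset.sum_Ico_eq_sum_range]
    have hn1 : n + 1 - k = (n - k) + 1 := by omega
    rw [hn1]
    calc ∑ i ∈ Finset.range (n - k + 1),
          (n.choose (k + i) : ℝ) * a ^ (k + i) * b ^ (n - (k + i)) * ((k + i).descFactorial k : ℝ)
        = ∑ i ∈ Finset.range (n - k + 1),
            (n.descFactorial k : ℝ) * a ^ k * (a ^ i * b ^ (n - k - i) * ((n - k).choose i : ℝ)) := by
          apply Finset.sum_congr rfl
          intro i hi
          simp only [Finset.mem_range] at hi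
          have hle : k + i ≤ n := by omega
          have hcast : (n.choose (k + i) : ℝ) * ((k + i).descFactorial k : ℝ)
              = (n.descFactorial k : ℝ) * ((n - k).choose i : ℝ) := by
            exact_mod_cast congrArg (Nat.cast (R := ℝ)) (nat_id n k i hle)
          have hsub2 : n - (k + i) = (n - k) - i := by omega
          rw [hsub2, pow_add]
          linear_combination (a ^ k * a ^ i * b ^ (n - k - i)) * hcast
      _ = (n.descFactorial k : ℝ) * a ^ k * (a + b) ^ (n - k) := by
          rw [← Finset.mul_sum, add_pow]
  · push_neg at hk
    rw [Nat.descFactorial_eq_zero_iff_lt.mpr hk]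
    push_cast
    rw [Finset.sum_eq_zero, zero_mul, zero_mul]
    intro s hs
    simp only [Finset.mem_range] at hs
    rw [Nat.descFactorial_eq_zero_iff_lt.mpr (by omega)]
    simp

lemma cube_eq (s : ℕ) : (s : ℝ) ^ 3
    = (s.descFactorial 3 : ℝ) + 3 * (s.descFactorial 2 : ℝ) + (s.descFactorial 1 : ℝ) := by
  match s with
  | 0 => norm_num
  | 1 => norm_num [Nat.descFactorial]
  | 2 => norm_num [Nat.descFactorial]
  | (m + 3) =>
    simp only [Nat.descFactorial_succ, Nat.descFactorial_zero, Nat.succ_sub_succ]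
    push_cast
    ring

/-- if `S` is Binomial(n,p)-distributed and `α = n·p`, then
`E[S³ e^{βS}] ≤ (α³e^{3β} + 3α²e^{2β} + α e^{β}) exp((e^{β}−1)α)`.
The expectation is written out explicitly via the binomial distribution:
`E[S³ e^{βS}] = Σ_{s=0}^{n} C(n,s) p^s (1−p)^{n−s} s³ e^{βs}`. -/
theorem binomial_cubic_exponential_moment (n : ℕ) (p : ℝ) (hp0 : 0 ≤ p) (hp1 : p ≤ 1)
    (β : ℝ) (hβ : 0 ≤ β) :
    ∑ s ∈ Finset.range (n + 1),
        (n.choose s : ℝ) * p ^ s * (1 - p) ^ (n - s) * (s : ℝ) ^ 3 * exp (β * s) ≤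
      (((n : ℝ) * p) ^ 3 * exp (3 * β) + 3 * ((n : ℝ) * p) ^ 2 * exp (2 * β) +
          (n : ℝ) * p * exp β) * exp ((exp β - 1) * ((n : ℝ) * p)) := by
  set E := exp β with hE
  set a := p * E with ha
  set q := 1 - p with hq
  have hE1 : 1 ≤ E := one_le_exp hβ
  have hq0 : 0 ≤ q := by rw [hq]; linarith
  have ha0 : 0 ≤ a := mul_nonneg hp0 (le_trans zero_le_one hE1)
  have ht0 : (0:ℝ) ≤ a + q := by linarith
  have ht1 : (1:ℝ) ≤ a + q := by
    have h := mul_nonneg hp0 (by linarith : (0:ℝ) ≤ E - 1)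
    rw [ha, hq]; nlinarith
  have hlhs : ∑ s ∈ Finset.range (n + 1),
        (n.choose s : ℝ) * p ^ s * (1 - p) ^ (n - s) * (s : ℝ) ^ 3 * exp (β * s)
      = (n.descFactorial 3 : ℝ) * a ^ 3 * (a + q) ^ (n - 3)
        + 3 * ((n.descFactorial 2 : ℝ) * a ^ 2 * (a + q) ^ (n - 2))
        + (n.descFactorial 1 : ℝ) * a ^ 1 * (a + q) ^ (n - 1) := by
    rw [← sum_desc n 3 a q, ← sum_desc n 2 a q, ← sum_desc n 1 a q,
      Finset.mul_sum, ← Finset.sum_add_distrib, ← Finset.sum_add_distrib]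
    apply Finset.sum_congr rfl
    intro s _
    have hexp : exp (β * s) = E ^ s := by rw [mul_comm, hE, exp_nat_mul]
    rw [hexp, cube_eq s, ha, hq]
    ring
  rw [hlhs]
  have hX : ∀ k : ℕ, (a + q) ^ (n - k) ≤ exp ((E - 1) * ((n:ℝ) * p)) := by
    intro k
    calc (a + q) ^ (n - k) ≤ (a + q) ^ n := pow_le_pow_right₀ ht1 (Nat.sub_le n k)
      _ ≤ (exp (p * (E - 1))) ^ n := by
          apply pow_le_pow_left₀ ht0
          have h := add_one_le_exp (p * (E - 1))
          rw [ha, hq]; nlinarith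
      _ = exp ((E - 1) * ((n:ℝ) * p)) := by
          rw [← exp_nat_mul]; ring_nf
  have hX0 : 0 ≤ exp ((E - 1) * ((n:ℝ) * p)) := (exp_pos _).le
  have key : ∀ k : ℕ, (n.descFactorial k : ℝ) * a ^ k * (a + q) ^ (n - k)
      ≤ ((n:ℝ) * p) ^ k * E ^ k * exp ((E - 1) * ((n:ℝ) * p)) := by
    intro k
    have hdesc : (n.descFactorial k : ℝ) ≤ (n : ℝ) ^ k := by
      exact_mod_cast Nat.cast_le.mpr (Nat.descFactorial_le_pow n k)
    have h1 : (n.descFactorial k : ℝ) * a ^ k ≤ ((n:ℝ) * p) ^ k * E ^ k := by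
      have h2 : ((n:ℝ) * p) ^ k * E ^ k = (n:ℝ) ^ k * a ^ k := by
        rw [ha, mul_pow, mul_pow]; ring
      rw [h2]
      exact mul_le_mul_of_nonneg_right hdesc (pow_nonneg ha0 k)
    exact mul_le_mul h1 (hX k) (pow_nonneg ht0 _) (by positivity)
  have hE3 : exp (3 * β) = E ^ 3 := by rw [hE, ← exp_nat_mul]; norm_num
  have hE2 : exp (2 * β) = E ^ 2 := by rw [hE, ← exp_nat_mul]; norm_num
  rw [hE3, hE2]
  have k3 := key 3
  have k2 := key 2
  have k1 := key 1
  rw [pow_one] at k1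
  nlinarith [k3, k2, k1, hX0]
end
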